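/- Let m ≥ 1 and let ν_0,…,ν_m, b_0,…,b_m, z_1,…,z_m, and for j=1,…,l let ν_k^j, b_k^j, z_k^j (1 ≤ k ≤ c_j) and λ_j ≥ 0 be nonnegative integers. Assume: (i) Σ_n ν_n t^n = Σ_n b_n t^n + (1+t)Σ_n (ν_n − z_n)t^{n−1} with ν_n ≥ z_n; (ii) for each j, Σ_k ν_k^j t^k = Σ_k b_k^j t^k + (1+t)Σ_k (ν_k^j − z_k^j)t^{k−1} with ν_k^j ≥ z_k^j; (iii) ν_n = Σ_{λ_j + k = n} ν_k^j for all n; and (iv) Σ_{λ_j + k = n} z_k^j ≥ z_n for all n. Then Σ_j (Σ_k b_k^j t^k) t^{λ_j} = Σ_n b_n t^n + (1+t)R(t) where R(t) = Σ_{n=1}^m (Σ_{λ_j + k = n} z_k^j − z_n) t^{n−1} has nonnegative integer coefficients. -/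
import Mathlib


open Polynomial

lemma swap_sum16 {M : Type*} [AddCommMonoid M] {l m : ℕ} (lam cdim : Fin l → ℕ)
    (hdim : ∀ j, lam j + cdim j ≤ m) (a : ℕ) (g : Fin l → ℕ → M) :
    (∑ j : Fin l, ∑ k ∈ Finset.Icc a (cdim j), g j (lam j + k)) =
    ∑ n ∈ Finset.Icc a m, ∑ j ∈ Finset.univ.filter
      (fun j => lam j + a ≤ n ∧ n ≤ lam j + cdim j), g j n := by
  rw [Finset.sum_sigma', Finset.sum_sigma']
  apply Finset.sum_nbij' (i := fun x => (⟨lam x.1 + x.2, x.1⟩ : Σ _n : ℕ, Fin l))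
    (j := fun y => (⟨y.2, y.1 - lam y.2⟩ : Σ _j : Fin l, ℕ))
  · rintro ⟨j, k⟩ h
    simp only [Finset.mem_sigma, Finset.mem_Icc, Finset.mem_filter, Finset.mem_univ, true_and, and_true] at h ⊢
    have := hdim j
    omega
  · rintro ⟨n, j⟩ h
    simp only [Finset.mem_sigma, Finset.mem_Icc, Finset.mem_filter, Finset.mem_univ, true_and, and_true] at h ⊢
    omega
  · rintro ⟨j, k⟩ h
    simp
  · rintro ⟨n, j⟩ h
    simp only [Finset.mem_sigma, Finset.mem_Icc, Finset.mem_filter, Finset.mem_univ, true_and, and_true] at h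
    simp only [Sigma.mk.inj_iff, heq_eq_eq]
    exact ⟨by omega, trivial⟩
  · rintro ⟨j, k⟩ h
    simp

set_option maxHeartbeats 1000000 in
/-- the combinatorial skeleton of the proof of the Morse-Bott
inequalities.  Given the polynomial Morse inequalities for `h` (data `ν, b, z`) and
for each `f_j` (data `ν^j, b^j, z^j` in degrees `0, …, c_j`, with `z^j_0 = ν^j_0`
since `∂_0 = 0`), the index relation `ν_n = Σ_{λ_j + k = n} ν^j_k`, and the kernel
estimate `Σ_{λ_j + k = n} z^j_k ≥ z_n`, one gets
`Σ_j (Σ_k b^j_k t^k) t^{λ_j} = Σ_n b_n t^n + (1+t) R(t)` with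
`R(t) = Σ_{n=1}^m (Σ_{λ_j + k = n} z^j_k - z_n) t^{n-1}` having nonnegative
coefficients. -/
theorem stmt_16 (m l : ℕ) (hm : 1 ≤ m)
    (ν b z : ℕ → ℕ) (lam cdim : Fin l → ℕ) (νj bj zj : Fin l → ℕ → ℕ)
    (hdim : ∀ j, lam j + cdim j ≤ m)
    (hz0 : ∀ j, zj j 0 = νj j 0)
    (hzν : ∀ n, z n ≤ ν n)
    (hzνj : ∀ j k, zj j k ≤ νj j k)
    -- (i) polynomial Morse inequalities for `h`
    (hi : (∑ n ∈ Finset.range (m + 1), Polynomial.C (ν n : ℤ) * X ^ n) =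
      (∑ n ∈ Finset.range (m + 1), Polynomial.C (b n : ℤ) * X ^ n) +
        (1 + X) * ∑ n ∈ Finset.Icc 1 m,
          Polynomial.C ((ν n : ℤ) - (z n : ℤ)) * X ^ (n - 1))
    -- (ii) polynomial Morse inequalities for each `f_j`
    (hii : ∀ j, (∑ k ∈ Finset.range (cdim j + 1), Polynomial.C (νj j k : ℤ) * X ^ k) =
      (∑ k ∈ Finset.range (cdim j + 1), Polynomial.C (bj j k : ℤ) * X ^ k) +
        (1 + X) * ∑ k ∈ Finset.Icc 1 (cdim j),
          Polynomial.C ((νj j k : ℤ) - (zj j k : ℤ)) * X ^ (k - 1))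
    -- (iii) `ν_n = Σ_{λ_j + k = n} ν^j_k`
    (hiii : ∀ n, ν n = ∑ j ∈ Finset.univ.filter
        (fun j : Fin l => lam j ≤ n ∧ n ≤ lam j + cdim j), νj j (n - lam j))
    -- (iv) `Σ_{λ_j + k = n} z^j_k ≥ z_n`
    (hiv : ∀ n, z n ≤ ∑ j ∈ Finset.univ.filter
        (fun j : Fin l => lam j ≤ n ∧ n ≤ lam j + cdim j), zj j (n - lam j)) :
    (∑ j : Fin l, (∑ k ∈ Finset.range (cdim j + 1),
          Polynomial.C (bj j k : ℤ) * X ^ k) * X ^ lam j) =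
      (∑ n ∈ Finset.range (m + 1), Polynomial.C (b n : ℤ) * X ^ n) +
        (1 + X) * ∑ n ∈ Finset.Icc 1 m,
          Polynomial.C (((∑ j ∈ Finset.univ.filter
              (fun j : Fin l => lam j ≤ n ∧ n ≤ lam j + cdim j),
                zj j (n - lam j) : ℕ) : ℤ) - (z n : ℤ)) * X ^ (n - 1) ∧
    ∀ n ∈ Finset.Icc 1 m,
      0 ≤ ((∑ j ∈ Finset.univ.filter
          (fun j : Fin l => lam j ≤ n ∧ n ≤ lam j + cdim j),
            zj j (n - lam j) : ℕ) : ℤ) - (z n : ℤ) := by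
  have hrange : ∀ c : ℕ, Finset.range (c + 1) = Finset.Icc 0 c := by
    intro c; ext x; simp [Nat.lt_succ_iff]
  -- key1
  have key1 : (∑ j : Fin l, (∑ k ∈ Finset.range (cdim j + 1),
        Polynomial.C (νj j k : ℤ) * X ^ k) * X ^ lam j) =
      ∑ n ∈ Finset.range (m + 1), Polynomial.C (ν n : ℤ) * X ^ n := by
    have step : ∀ j : Fin l, (∑ k ∈ Finset.range (cdim j + 1),
        Polynomial.C (νj j k : ℤ) * X ^ k) * X ^ lam j =
        ∑ k ∈ Finset.Icc 0 (cdim j),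
          (fun (j : Fin l) (n : ℕ) => Polynomial.C (νj j (n - lam j) : ℤ) * X ^ n) j (lam j + k) := by
      intro j
      rw [hrange, Finset.sum_mul]
      refine Finset.sum_congr rfl fun k _ => ?_
      simp only [Nat.add_sub_cancel_left]
      rw [mul_assoc, ← pow_add, add_comm k (lam j)]
    calc (∑ j : Fin l, (∑ k ∈ Finset.range (cdim j + 1),
            Polynomial.C (νj j k : ℤ) * X ^ k) * X ^ lam j)
        = ∑ j : Fin l, ∑ k ∈ Finset.Icc 0 (cdim j),
          (fun (j : Fin l) (n : ℕ) => Polynomial.C (νj j (n - lam j) : ℤ) * X ^ n) j (lam j + k) :=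
          Finset.sum_congr rfl fun j _ => step j
      _ = ∑ n ∈ Finset.Icc 0 m, ∑ j ∈ Finset.univ.filter
            (fun j => lam j + 0 ≤ n ∧ n ≤ lam j + cdim j),
            Polynomial.C (νj j (n - lam j) : ℤ) * X ^ n := swap_sum16 (m := m) lam cdim hdim 0
              (fun (j : Fin l) (n : ℕ) => Polynomial.C (νj j (n - lam j) : ℤ) * X ^ n)
      _ = ∑ n ∈ Finset.range (m + 1), Polynomial.C (ν n : ℤ) * X ^ n := by
          rw [hrange]
          refine Finset.sum_congr rfl fun n _ => ?_
          simp only [add_zero]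
          rw [hiii n, Nat.cast_sum, map_sum, Finset.sum_mul]
  -- key2
  have key2 : (∑ j : Fin l, (∑ k ∈ Finset.Icc 1 (cdim j),
        Polynomial.C ((νj j k : ℤ) - (zj j k : ℤ)) * X ^ (k - 1)) * X ^ lam j) =
      ∑ n ∈ Finset.Icc 1 m,
        Polynomial.C ((ν n : ℤ) - ((∑ j ∈ Finset.univ.filter
          (fun j : Fin l => lam j ≤ n ∧ n ≤ lam j + cdim j),
            zj j (n - lam j) : ℕ) : ℤ)) * X ^ (n - 1) := by
    have step : ∀ j : Fin l, (∑ k ∈ Finset.Icc 1 (cdim j),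
        Polynomial.C ((νj j k : ℤ) - (zj j k : ℤ)) * X ^ (k - 1)) * X ^ lam j =
        ∑ k ∈ Finset.Icc 1 (cdim j),
          (fun (j : Fin l) (n : ℕ) =>
            Polynomial.C ((νj j (n - lam j) : ℤ) - (zj j (n - lam j) : ℤ)) * X ^ (n - 1)) j
            (lam j + k) := by
      intro j
      rw [Finset.sum_mul]
      refine Finset.sum_congr rfl fun k hk => ?_
      simp only [Finset.mem_Icc] at hk
      simp only [Nat.add_sub_cancel_left]
      rw [mul_assoc, ← pow_add]
      congr 2
      omega
    calc (∑ j : Fin l, (∑ k ∈ Finset.Icc 1 (cdim j),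
            Polynomial.C ((νj j k : ℤ) - (zj j k : ℤ)) * X ^ (k - 1)) * X ^ lam j)
        = ∑ j : Fin l, ∑ k ∈ Finset.Icc 1 (cdim j),
          (fun (j : Fin l) (n : ℕ) =>
            Polynomial.C ((νj j (n - lam j) : ℤ) - (zj j (n - lam j) : ℤ)) * X ^ (n - 1)) j
            (lam j + k) := Finset.sum_congr rfl fun j _ => step j
      _ = ∑ n ∈ Finset.Icc 1 m, ∑ j ∈ Finset.univ.filter
            (fun j => lam j + 1 ≤ n ∧ n ≤ lam j + cdim j),
            Polynomial.C ((νj j (n - lam j) : ℤ) - (zj j (n - lam j) : ℤ)) * X ^ (n - 1) :=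
            swap_sum16 (m := m) lam cdim hdim 1
              (fun (j : Fin l) (n : ℕ) =>
                Polynomial.C ((νj j (n - lam j) : ℤ) - (zj j (n - lam j) : ℤ)) * X ^ (n - 1))
      _ = ∑ n ∈ Finset.Icc 1 m, ∑ j ∈ Finset.univ.filter
            (fun j => lam j ≤ n ∧ n ≤ lam j + cdim j),
            Polynomial.C ((νj j (n - lam j) : ℤ) - (zj j (n - lam j) : ℤ)) * X ^ (n - 1) := by
          refine Finset.sum_congr rfl fun n _ => ?_
          refine Finset.sum_subset ?_ ?_
          · intro j hj
            simp only [Finset.mem_filter, Finset.mem_univ, true_and] at hj ⊢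
            omega
          · intro j hj hj'
            simp only [Finset.mem_filter, Finset.mem_univ, true_and] at hj hj'
            have hjn : lam j = n := by omega
            have : n - lam j = 0 := by omega
            rw [this, hz0 j, sub_self, map_zero, zero_mul]
      _ = ∑ n ∈ Finset.Icc 1 m,
            Polynomial.C ((ν n : ℤ) - ((∑ j ∈ Finset.univ.filter
              (fun j : Fin l => lam j ≤ n ∧ n ≤ lam j + cdim j),
                zj j (n - lam j) : ℕ) : ℤ)) * X ^ (n - 1) := by
          refine Finset.sum_congr rfl fun n _ => ?_
          rw [← Finset.sum_mul]
          congr 1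
          rw [hiii n]
          push_cast
          rw [← Finset.sum_sub_distrib, map_sum]
  -- summed (ii)
  have e1 : (∑ j : Fin l, (∑ k ∈ Finset.range (cdim j + 1),
        Polynomial.C (νj j k : ℤ) * X ^ k) * X ^ lam j) =
      (∑ j : Fin l, (∑ k ∈ Finset.range (cdim j + 1),
        Polynomial.C (bj j k : ℤ) * X ^ k) * X ^ lam j) +
      (1 + X) * ∑ j : Fin l, (∑ k ∈ Finset.Icc 1 (cdim j),
        Polynomial.C ((νj j k : ℤ) - (zj j k : ℤ)) * X ^ (k - 1)) * X ^ lam j := by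
    rw [Finset.mul_sum, ← Finset.sum_add_distrib]
    exact Finset.sum_congr rfl fun j _ => by rw [hii j]; ring
  have e5 : (∑ n ∈ Finset.Icc 1 m, Polynomial.C ((ν n : ℤ) - (z n : ℤ)) * X ^ (n - 1)) -
      (∑ n ∈ Finset.Icc 1 m,
        Polynomial.C ((ν n : ℤ) - ((∑ j ∈ Finset.univ.filter
          (fun j : Fin l => lam j ≤ n ∧ n ≤ lam j + cdim j),
            zj j (n - lam j) : ℕ) : ℤ)) * X ^ (n - 1)) =
      ∑ n ∈ Finset.Icc 1 m,
        Polynomial.C (((∑ j ∈ Finset.univ.filter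
          (fun j : Fin l => lam j ≤ n ∧ n ≤ lam j + cdim j),
            zj j (n - lam j) : ℕ) : ℤ) - (z n : ℤ)) * X ^ (n - 1) := by
    rw [← Finset.sum_sub_distrib]
    refine Finset.sum_congr rfl fun n _ => ?_
    rw [← sub_mul, ← map_sub]
    congr 2
    ring
  constructor
  · linear_combination key1 - e1 + hi - (1 + X) * key2 + (1 + X) * e5
  · intro n _
    have := hiv n
    have : (z n : ℤ) ≤ (∑ j ∈ Finset.univ.filter
        (fun j : Fin l => lam j ≤ n ∧ n ≤ lam j + cdim j), zj j (n - lam j) : ℕ) := by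
      exact_mod_cast this
    omega
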